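/- Given toric monoid homomorphisms φ₁ : σ₁ → σ and φ₂ : σ₂ → σ, the fiber product σ₁ ×_σ σ₂ = {(v,w) ∈ σ₁ × σ₂ : φ₁(v) = φ₂(w)} is again a toric monoid; i.e. it is finitely generated, sharp, integral, saturated, and torsion-free. -/

import Mathlib

namespace Toric

variable {G : Type*} [AddCommGroup G]

/-- A toric monoid inside the (torsion-free, in applications) ambient group
`G`: finitely generated, sharp and saturated (cancellativity — integrality —
and torsion-freeness are automatic for submonoids of a torsion-free group). -/
structure IsToric (σ : AddSubmonoid G) : Prop where
  fg : σ.FG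
  sharp : ∀ v ∈ σ, -v ∈ σ → v = 0
  saturated : ∀ v ∈ AddSubgroup.closure (σ : Set G), ∀ k : ℕ, 0 < k → k • v ∈ σ → v ∈ σ

/-- `τ` is a face of `σ`. -/
def IsFace (τ σ : AddSubmonoid G) : Prop :=
  τ ≤ σ ∧ ∀ v w : G, v ∈ σ → w ∈ σ → v + w ∈ τ → v ∈ τ ∧ w ∈ τ

/-- A smooth toric monoid: freely generated by linearly independent elements. -/
def IsSmooth (σ : AddSubmonoid G) : Prop :=
  ∃ (k : ℕ) (b : Fin k → G), LinearIndependent ℤ b ∧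
    σ = AddSubmonoid.closure (Set.range b)

variable {G₁ G₂ H : Type*} [AddCommGroup G₁] [AddCommGroup G₂] [AddCommGroup H]

/-- The fiber product `σ₁ ×_σ σ₂ = {(v,w) : φ₁ v = φ₂ w}` of two monoid
homomorphisms, as a submonoid of `G₁ × G₂`. -/
def fiberProd (σ₁ : AddSubmonoid G₁) (σ₂ : AddSubmonoid G₂) (σ : AddSubmonoid H)
    (φ₁ : σ₁ →+ σ) (φ₂ : σ₂ →+ σ) : AddSubmonoid (G₁ × G₂) where
  carrier := {p | ∃ (h₁ : p.1 ∈ σ₁) (h₂ : p.2 ∈ σ₂), φ₁ ⟨p.1, h₁⟩ = φ₂ ⟨p.2, h₂⟩}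
  zero_mem' := by
    refine ⟨σ₁.zero_mem, σ₂.zero_mem, ?_⟩
    have e₁ : (⟨(0 : G₁ × G₂).1, σ₁.zero_mem⟩ : σ₁) = 0 := rfl
    have e₂ : (⟨(0 : G₁ × G₂).2, σ₂.zero_mem⟩ : σ₂) = 0 := rfl
    rw [e₁, e₂, map_zero, map_zero]
  add_mem' := by
    rintro p q ⟨h₁, h₂, hp⟩ ⟨g₁, g₂, hq⟩
    refine ⟨σ₁.add_mem h₁ g₁, σ₂.add_mem h₂ g₂, ?_⟩
    have e₁ : (⟨(p + q).1, σ₁.add_mem h₁ g₁⟩ : σ₁) = ⟨p.1, h₁⟩ + ⟨q.1, g₁⟩ := rfl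
    have e₂ : (⟨(p + q).2, σ₂.add_mem h₂ g₂⟩ : σ₂) = ⟨p.2, h₂⟩ + ⟨q.2, g₂⟩ := rfl
    rw [e₁, e₂, map_add, map_add, hp, hq]

end Toric

namespace Toric



/-- The kernel of an additive map restricted to `ι → ℕ`, as a submonoid. -/
def kerMonoid {ι : Type*} {M : Type*} [AddCommGroup M] (F : (ι → ℤ) →+ M) :
    AddSubmonoid (ι → ℕ) where
  carrier := {a | F (fun i => (a i : ℤ)) = 0}
  zero_mem' := by
    show F (fun i => (((0 : ι → ℕ) i : ℤ))) = 0
    have : (fun i : ι => (((0 : ι → ℕ) i : ℤ))) = (0 : ι → ℤ) := by funext i; simp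
    rw [this, map_zero]
  add_mem' := by
    intro a b ha hb
    have : (fun i : ι => (((a + b) i : ℤ))) =
        (fun i => (a i : ℤ)) + (fun i => (b i : ℤ)) := by funext i; simp [Nat.cast_add]
    simp only [Set.mem_setOf_eq] at *
    rw [this, map_add, ha, hb, add_zero]

lemma kerMonoid_fg {ι : Type*} [Fintype ι] {M : Type*} [AddCommGroup M]
    (F : (ι → ℤ) →+ M) : (kerMonoid F).FG := by
  classical
  set S : Set (ι → ℕ) := (kerMonoid F : Set (ι → ℕ)) with hS
  -- minimal nonzero elements
  set Min : Set (ι → ℕ) :=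
    {a | a ∈ S ∧ a ≠ 0 ∧ ∀ b ∈ S, b ≠ 0 → b ≤ a → b = a} with hMin
  have hpwo : S.IsPWO := by
    have : IsWellOrder ℕ (· < ·) := inferInstance
    exact Set.isPWO_of_wellQuasiOrderedLE S
  have hMinSub : Min ⊆ S := fun a ha => ha.1
  have hanti : IsAntichain (· ≤ ·) Min := by
    intro a ha b hb hne hle
    exact hne (hb.2.2 a ha.1 ha.2.1 hle)
  have hfin : Min.Finite :=
    hanti.finite_of_partiallyWellOrderedOn (hpwo.mono hMinSub)
  refine ⟨hfin.toFinset, ?_⟩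
  rw [Set.Finite.coe_toFinset]
  apply le_antisymm
  · rw [AddSubmonoid.closure_le]
    exact hMinSub
  · -- every element of S is a sum of minimal elements, by strong induction on ∑ a i
    intro a ha
    have key : ∀ n : ℕ, ∀ a : ι → ℕ, (∑ i, a i) = n → a ∈ S →
        a ∈ AddSubmonoid.closure Min := by
      intro n
      induction n using Nat.strong_induction_on with
      | _ n ih =>
        intro a hsum haS
        by_cases h0 : a = 0
        · rw [h0]; exact AddSubmonoid.zero_mem _
        · -- find a minimal element below a
          set T : Set (ι → ℕ) := {b | b ∈ S ∧ b ≠ 0 ∧ b ≤ a} with hT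
          have hTsub : T ⊆ S := fun b hb => hb.1
          have hTwf : T.IsWF := (hpwo.mono hTsub).isWF
          have hTne : T.Nonempty := ⟨a, haS, h0, le_refl a⟩
          set m := hTwf.min hTne with hm
          have hmT : m ∈ T := hTwf.min_mem hTne
          have hmMin : m ∈ Min := by
            refine ⟨hmT.1, hmT.2.1, fun b hbS hb0 hble => ?_⟩
            by_contra hne
            exact hTwf.not_lt_min hTne ⟨hbS, hb0, hble.trans hmT.2.2⟩
              (lt_of_le_of_ne hble hne)
          have hle : m ≤ a := hmT.2.2
          -- a - m ∈ S
          have hsub : a - m ∈ S := by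
            have : (fun i : ι => (((a - m) i : ℤ))) =
                (fun i => (a i : ℤ)) - (fun i => (m i : ℤ)) := by
              funext i
              simp only [Pi.sub_apply]
              rw [Nat.cast_sub (hle i)]
            show F _ = 0
            rw [this, map_sub]
            have h1 : F (fun i => (a i : ℤ)) = 0 := haS
            have h2 : F (fun i => (m i : ℤ)) = 0 := hmT.1
            rw [h1, h2, sub_zero]
          have hdecomp : (a - m) + m = a := by
            funext i
            exact Nat.sub_add_cancel (hle i)
          have hmpos : 0 < ∑ i, m i := by
            rcases Function.ne_iff.1 hmT.2.1 with ⟨i, hi⟩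
            exact Finset.sum_pos' (fun _ _ => Nat.zero_le _)
              ⟨i, Finset.mem_univ i, Nat.pos_of_ne_zero hi⟩
          have hsumlt : (∑ i, (a - m) i) < n := by
            have : (∑ i, (a - m) i) + (∑ i, m i) = ∑ i, a i := by
              rw [← Finset.sum_add_distrib]
              exact Finset.sum_congr rfl fun i _ => Nat.sub_add_cancel (hle i)
            omega
          have h1 : (a - m) ∈ AddSubmonoid.closure Min :=
            ih _ hsumlt _ rfl hsub
          have h2 : m ∈ AddSubmonoid.closure Min :=
            AddSubmonoid.subset_closure hmMin
          rw [← hdecomp]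
          exact AddSubmonoid.add_mem _ h1 h2
    exact key _ a rfl ha


lemma mem_closure_range_iff {ι M : Type*} [Fintype ι] [DecidableEq ι] [AddCommMonoid M]
    (e : ι → M) (p : M) :
    p ∈ AddSubmonoid.closure (Set.range e) ↔ ∃ a : ι → ℕ, ∑ i, a i • e i = p := by
  constructor
  · intro hp
    induction hp using AddSubmonoid.closure_induction with
    | mem x hx =>
      obtain ⟨i, rfl⟩ := hx
      exact ⟨Pi.single i 1, by simp [Pi.single_apply, ite_smul]⟩
    | zero => exact ⟨0, by simp⟩
    | add x y _ _ hx hy =>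
      obtain ⟨a, rfl⟩ := hx
      obtain ⟨b, rfl⟩ := hy
      exact ⟨a + b, by simp [add_nsmul, Finset.sum_add_distrib]⟩
  · rintro ⟨a, rfl⟩
    exact AddSubmonoid.sum_mem _ fun i _ =>
      AddSubmonoid.nsmul_mem _ (AddSubmonoid.subset_closure (Set.mem_range_self i)) _
/-- The fiber product of two toric monoid homomorphisms
`φᵢ : σᵢ → σ` is again a toric monoid. -/
theorem fiberProd_isToric {n₁ n₂ m : ℕ}
    (σ₁ : AddSubmonoid (Fin n₁ → ℤ)) (σ₂ : AddSubmonoid (Fin n₂ → ℤ))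
    (σ : AddSubmonoid (Fin m → ℤ))
    (hσ₁ : IsToric σ₁) (hσ₂ : IsToric σ₂) (hσ : IsToric σ)
    (φ₁ : σ₁ →+ σ) (φ₂ : σ₂ →+ σ) :
    IsToric (fiberProd σ₁ σ₂ σ φ₁ φ₂) := by
  classical
  obtain ⟨T₁, hT₁⟩ := hσ₁.fg
  obtain ⟨T₂, hT₂⟩ := hσ₂.fg
  -- index type and generators of σ₁ × σ₂
  let ι := (↥T₁ ⊕ ↥T₂)
  let e : ι → (Fin n₁ → ℤ) × (Fin n₂ → ℤ) :=
    Sum.elim (fun t => ((t : Fin n₁ → ℤ), 0)) (fun t => (0, (t : Fin n₂ → ℤ)))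
  have hv : ∀ i, (e i).1 ∈ σ₁ := by
    rintro (t | t)
    · exact hT₁ ▸ AddSubmonoid.subset_closure t.2
    · exact σ₁.zero_mem
  have hw : ∀ i, (e i).2 ∈ σ₂ := by
    rintro (t | t)
    · exact σ₂.zero_mem
    · exact hT₂ ▸ AddSubmonoid.subset_closure t.2
  have hrange : AddSubmonoid.closure (Set.range e) = σ₁.prod σ₂ := by
    apply le_antisymm
    · rw [AddSubmonoid.closure_le]
      rintro p ⟨i, rfl⟩
      exact ⟨hv i, hw i⟩
    · rintro ⟨x, y⟩ ⟨hx, hy⟩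
      have h1 : ((x, (0 : Fin n₂ → ℤ)) : (Fin n₁ → ℤ) × (Fin n₂ → ℤ)) ∈
          AddSubmonoid.closure (Set.range e) := by
        have hx' : x ∈ AddSubmonoid.closure (T₁ : Set (Fin n₁ → ℤ)) := hT₁ ▸ hx
        have := AddSubmonoid.mem_map_of_mem
          (AddMonoidHom.inl (Fin n₁ → ℤ) (Fin n₂ → ℤ)) hx'
        rw [AddMonoidHom.map_mclosure] at this
        refine AddSubmonoid.closure_mono ?_ this
        rintro _ ⟨t, ht, rfl⟩
        exact ⟨Sum.inl ⟨t, ht⟩, rfl⟩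
      have h2 : (((0 : Fin n₁ → ℤ), y) : (Fin n₁ → ℤ) × (Fin n₂ → ℤ)) ∈
          AddSubmonoid.closure (Set.range e) := by
        have hy' : y ∈ AddSubmonoid.closure (T₂ : Set (Fin n₂ → ℤ)) := hT₂ ▸ hy
        have := AddSubmonoid.mem_map_of_mem
          (AddMonoidHom.inr (Fin n₁ → ℤ) (Fin n₂ → ℤ)) hy'
        rw [AddMonoidHom.map_mclosure] at this
        refine AddSubmonoid.closure_mono ?_ this
        rintro _ ⟨t, ht, rfl⟩
        exact ⟨Sum.inr ⟨t, ht⟩, rfl⟩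
      have : ((x, y) : (Fin n₁ → ℤ) × (Fin n₂ → ℤ)) = (x, 0) + (0, y) := by
        simp
      rw [this]
      exact AddSubmonoid.add_mem _ h1 h2
  -- the linear form measuring failure of φ₁ = φ₂
  let c : ι → (Fin m → ℤ) := fun i =>
    (φ₁ ⟨(e i).1, hv i⟩ : Fin m → ℤ) - (φ₂ ⟨(e i).2, hw i⟩ : Fin m → ℤ)
  let F : (ι → ℤ) →+ (Fin m → ℤ) :=
    { toFun := fun x => ∑ i, x i • c i
      map_zero' := by simp
      map_add' := by
        intro x y
        simp [add_smul, Finset.sum_add_distrib] }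
  let ψ : (ι → ℕ) →+ ((Fin n₁ → ℤ) × (Fin n₂ → ℤ)) :=
    { toFun := fun a => ∑ i, a i • e i
      map_zero' := by simp
      map_add' := by
        intro a b
        simp only [Pi.add_apply, add_nsmul, Finset.sum_add_distrib] }
  have hψ1 : ∀ a : ι → ℕ, (ψ a).1 = ∑ i, a i • (e i).1 := by
    intro a
    simp [ψ, Prod.fst_sum]
  have hψ2 : ∀ a : ι → ℕ, (ψ a).2 = ∑ i, a i • (e i).2 := by
    intro a
    simp [ψ, Prod.snd_sum]
  have hm₁ : ∀ a : ι → ℕ, (ψ a).1 ∈ σ₁ := fun a => by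
    rw [hψ1]
    exact AddSubmonoid.sum_mem _ fun i _ => AddSubmonoid.nsmul_mem _ (hv i) _
  have hm₂ : ∀ a : ι → ℕ, (ψ a).2 ∈ σ₂ := fun a => by
    rw [hψ2]
    exact AddSubmonoid.sum_mem _ fun i _ => AddSubmonoid.nsmul_mem _ (hw i) _
  have key₁ : ∀ a : ι → ℕ, (φ₁ ⟨(ψ a).1, hm₁ a⟩ : Fin m → ℤ) =
      ∑ i, a i • (φ₁ ⟨(e i).1, hv i⟩ : Fin m → ℤ) := by
    intro a
    have : (⟨(ψ a).1, hm₁ a⟩ : σ₁) = ∑ i, a i • (⟨(e i).1, hv i⟩ : σ₁) := by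
      apply Subtype.ext
      show (ψ a).1 = ((∑ i, a i • (⟨(e i).1, hv i⟩ : σ₁) : σ₁) : Fin n₁ → ℤ)
      rw [hψ1]
      push_cast
      rfl
    rw [this, map_sum]
    push_cast
    refine Finset.sum_congr rfl fun i _ => ?_
    rw [map_nsmul]
    push_cast
    rfl
  have key₂ : ∀ a : ι → ℕ, (φ₂ ⟨(ψ a).2, hm₂ a⟩ : Fin m → ℤ) =
      ∑ i, a i • (φ₂ ⟨(e i).2, hw i⟩ : Fin m → ℤ) := by
    intro a
    have : (⟨(ψ a).2, hm₂ a⟩ : σ₂) = ∑ i, a i • (⟨(e i).2, hw i⟩ : σ₂) := by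
      apply Subtype.ext
      show (ψ a).2 = ((∑ i, a i • (⟨(e i).2, hw i⟩ : σ₂) : σ₂) : Fin n₂ → ℤ)
      rw [hψ2]
      push_cast
      rfl
    rw [this, map_sum]
    push_cast
    refine Finset.sum_congr rfl fun i _ => ?_
    rw [map_nsmul]
    push_cast
    rfl
  have hFa : ∀ a : ι → ℕ, F (fun i => (a i : ℤ)) =
      (∑ i, a i • (φ₁ ⟨(e i).1, hv i⟩ : Fin m → ℤ)) -
      (∑ i, a i • (φ₂ ⟨(e i).2, hw i⟩ : Fin m → ℤ)) := by
    intro a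
    show (∑ i, (a i : ℤ) • c i) = _
    rw [← Finset.sum_sub_distrib]
    refine Finset.sum_congr rfl fun i _ => ?_
    simp only [c, smul_sub]
    rw [natCast_zsmul, natCast_zsmul]
  have hmem : ∀ a : ι → ℕ,
      (ψ a ∈ fiberProd σ₁ σ₂ σ φ₁ φ₂ ↔ a ∈ kerMonoid F) := by
    intro a
    constructor
    · rintro ⟨h₁, h₂, heq⟩
      show F (fun i => (a i : ℤ)) = 0
      rw [hFa, sub_eq_zero, ← key₁ a, ← key₂ a]
      exact congrArg _ heq
    · intro ha
      have ha' : F (fun i => (a i : ℤ)) = 0 := ha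
      rw [hFa, sub_eq_zero, ← key₁ a, ← key₂ a] at ha'
      exact ⟨hm₁ a, hm₂ a, Subtype.ext ha'⟩
  have heq : fiberProd σ₁ σ₂ σ φ₁ φ₂ = (kerMonoid F).map ψ := by
    ext p
    constructor
    · intro hp
      obtain ⟨h₁, h₂, -⟩ := id hp
      have hp' : p ∈ AddSubmonoid.closure (Set.range e) := by
        rw [hrange]; exact ⟨h₁, h₂⟩
      obtain ⟨a, ha⟩ := (mem_closure_range_iff e p).1 hp'
      have hψa : ψ a = p := ha
      exact ⟨a, (hmem a).1 (hψa ▸ hp), hψa⟩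
    · rintro ⟨a, haK, rfl⟩
      exact (hmem a).2 haK
  constructor
  · rw [heq]
    exact (kerMonoid_fg F).map ψ
  · rintro p ⟨h₁, h₂, -⟩ hneg
    obtain ⟨h₁', h₂', -⟩ := hneg
    have e1 : p.1 = 0 := hσ₁.sharp p.1 h₁ h₁'
    have e2 : p.2 = 0 := hσ₂.sharp p.2 h₂ h₂'
    exact Prod.ext e1 e2
  · intro p hp k hk hkp
    obtain ⟨hk₁, hk₂, hkeq⟩ := hkp
    have hp1 : p.1 ∈ AddSubgroup.closure (σ₁ : Set (Fin n₁ → ℤ)) := by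
      have := AddSubgroup.mem_map_of_mem
        (AddMonoidHom.fst (Fin n₁ → ℤ) (Fin n₂ → ℤ)) hp
      rw [AddMonoidHom.map_closure] at this
      refine AddSubgroup.closure_mono ?_ this
      rintro _ ⟨q, ⟨hq₁, hq₂, -⟩, rfl⟩
      exact hq₁
    have hp2 : p.2 ∈ AddSubgroup.closure (σ₂ : Set (Fin n₂ → ℤ)) := by
      have := AddSubgroup.mem_map_of_mem
        (AddMonoidHom.snd (Fin n₁ → ℤ) (Fin n₂ → ℤ)) hp
      rw [AddMonoidHom.map_closure] at this
      refine AddSubgroup.closure_mono ?_ this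
      rintro _ ⟨q, ⟨hq₁, hq₂, -⟩, rfl⟩
      exact hq₂
    have h₁ : p.1 ∈ σ₁ := hσ₁.saturated p.1 hp1 k hk hk₁
    have h₂ : p.2 ∈ σ₂ := hσ₂.saturated p.2 hp2 k hk hk₂
    refine ⟨h₁, h₂, ?_⟩
    have e1 : (⟨(k • p).1, hk₁⟩ : σ₁) = k • (⟨p.1, h₁⟩ : σ₁) := rfl
    have e2 : (⟨(k • p).2, hk₂⟩ : σ₂) = k • (⟨p.2, h₂⟩ : σ₂) := rfl
    rw [e1, e2, map_nsmul, map_nsmul] at hkeq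
    have hcoe : k • (φ₁ ⟨p.1, h₁⟩ : Fin m → ℤ) = k • (φ₂ ⟨p.2, h₂⟩ : Fin m → ℤ) := by
      exact_mod_cast congrArg (fun x : σ => (x : Fin m → ℤ)) hkeq
    apply Subtype.ext
    have hk' : (k : ℤ) ≠ 0 := by exact_mod_cast hk.ne'
    apply smul_right_injective (Fin m → ℤ) hk'
    show (k : ℤ) • (φ₁ ⟨p.1, h₁⟩ : Fin m → ℤ) = (k : ℤ) • (φ₂ ⟨p.2, h₂⟩ : Fin m → ℤ)
    rw [natCast_zsmul, natCast_zsmul]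
    exact hcoe


end Toric
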